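/- Let c > 0 and β ∈ (0,1], let H be a Borel probability measure on [0,1], and let z ∈ (0,1) be a reservation value of H. Then p := H((z,1]) > 0; and setting m := (1/p)·∫_{(z,1]} x dH(x), one has m > z, the measure Ĥ defined as the restriction of H to [0,z] plus an atom of mass p at m is a Borel probability measure on [0,1] with the same mean as H, and z is also a reservation value of Ĥ. That is, replacing the portion of a distribution lying above its reservation value by a single point mass at its conditional mean preserves the reservation value. -/

import Mathlib

open MeasureTheory

/-- Replacing the portion of a distribution lying above its reservation value
`z` by a single point mass (of the same weight `p = H((z,1])`) at its conditional mean `m`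
yields a probability measure on `[0,1]` with the same mean and the same reservation value. -/
theorem stmt_5 (c β : ℝ) (hc : 0 < c) (hβ : 0 < β) (hβ1 : β ≤ 1)
    (H : Measure ℝ) [IsProbabilityMeasure H] (hH : H (Set.Icc (0:ℝ) 1)ᶜ = 0)
    (z : ℝ) (hz : z ∈ Set.Ioo (0:ℝ) 1)
    (hres : z = -c + β * ∫ x, max x z ∂H) :
    0 < (H (Set.Ioc z 1)).toReal ∧
    (let p : ℝ := (H (Set.Ioc z 1)).toReal
     let m : ℝ := (1 / p) * ∫ x in Set.Ioc z 1, x ∂H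
     let Hhat : Measure ℝ := H.restrict (Set.Icc 0 z) + ENNReal.ofReal p • Measure.dirac m
     z < m ∧ IsProbabilityMeasure Hhat ∧ Hhat (Set.Icc (0:ℝ) 1)ᶜ = 0 ∧
       (∫ x, x ∂Hhat) = (∫ x, x ∂H) ∧
       z = -c + β * ∫ x, max x z ∂Hhat) := by
  obtain ⟨hz0, hz1⟩ := hz
  have hmem : ∀ᵐ x ∂H, x ∈ Set.Icc (0:ℝ) 1 := by
    rw [ae_iff]
    exact hH
  -- integrability
  have hint_id : Integrable (fun x : ℝ => x) H := by
    refine Integrable.mono' (integrable_const 1) measurable_id.aestronglyMeasurable ?_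
    filter_upwards [hmem] with x hx
    rw [Real.norm_eq_abs, abs_le]
    exact ⟨by linarith [hx.1], hx.2⟩
  have hint_max : Integrable (fun x : ℝ => max x z) H := by
    refine Integrable.mono' (integrable_const 1)
      ((measurable_id.max measurable_const).aestronglyMeasurable) ?_
    filter_upwards [hmem] with x hx
    rw [Real.norm_eq_abs, abs_le]
    constructor
    · have : (0:ℝ) ≤ max x z := le_max_of_le_right hz0.le
      linarith
    · exact max_le hx.2 hz1.le
  -- p > 0
  have hne : H (Set.Ioc z 1) ≠ 0 := by
    intro h0
    have hnot : ∀ᵐ x ∂H, x ∉ Set.Ioc z 1 := by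
      rw [ae_iff]
      simp only [not_not, Set.setOf_mem_eq]
      exact h0
    have hle : ∀ᵐ x ∂H, x ≤ z := by
      filter_upwards [hmem, hnot] with x hx hx2
      by_contra h
      push_neg at h
      exact hx2 ⟨h, hx.2⟩
    have hmaxz : (∫ x, max x z ∂H) = ∫ _, z ∂H := by
      apply integral_congr_ae
      filter_upwards [hle] with x hx
      exact max_eq_right hx
    rw [hmaxz, integral_const, probReal_univ, one_smul] at hres
    nlinarith
  have hp : 0 < (H (Set.Ioc z 1)).toReal :=
    ENNReal.toReal_pos hne (measure_ne_top H _)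
  refine ⟨hp, ?_⟩
  set p : ℝ := (H (Set.Ioc z 1)).toReal with hpdef
  set sp : ℝ := ∫ x in Set.Ioc z 1, x ∂H with hspdef
  set m : ℝ := (1 / p) * sp with hmdef
  -- z * p < sp
  have hsub : (0:ℝ) < ∫ x in Set.Ioc z 1, (x - z) ∂H := by
    rw [setIntegral_pos_iff_support_of_nonneg_ae]
    · refine lt_of_lt_of_le (lt_of_le_of_ne (zero_le) (Ne.symm hne)) (measure_mono ?_)
      intro x hx
      exact ⟨sub_ne_zero.mpr (ne_of_gt hx.1), hx⟩
    · filter_upwards [ae_restrict_mem measurableSet_Ioc] with x hx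
      simp only [Pi.zero_apply]
      linarith [hx.1]
    · exact (hint_id.sub (integrable_const z)).integrableOn
  have hzp : z * p < sp := by
    have : (∫ x in Set.Ioc z 1, (x - z) ∂H)
        = sp - z * p := by
      rw [integral_sub hint_id.integrableOn (integrable_const z).integrableOn,
        setIntegral_const]
      simp [hspdef, hpdef, mul_comm, Measure.real]
    linarith [hsub, this ▸ hsub]
  have hm : z < m := by
    rw [hmdef, one_div, ← div_eq_inv_mul]
    exact (lt_div_iff₀ hp).mpr hzp
  have hsp_le : sp ≤ p := by
    have h1 : sp ≤ ∫ _ in Set.Ioc z 1, (1:ℝ) ∂H :=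
      setIntegral_mono_on hint_id.integrableOn (integrable_const 1).integrableOn
        measurableSet_Ioc (fun x hx => hx.2)
    simpa [hpdef, Measure.real] using h1
  have hm1 : m ≤ 1 := by
    rw [hmdef, one_div, ← div_eq_inv_mul]
    exact (div_le_one hp).mpr hsp_le
  have hm_mem : m ∈ Set.Icc (0:ℝ) 1 := ⟨le_of_lt (lt_trans hz0 hm), hm1⟩
  have hpm : p * m = sp := by
    rw [hmdef]
    field_simp
  -- disjoint split of [0,1]
  have hdisj : Disjoint (Set.Icc (0:ℝ) z) (Set.Ioc z 1) :=
    Set.disjoint_left.mpr (fun x hx hx2 => absurd hx.2 (not_le.mpr hx2.1))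
  have hrest : H.restrict (Set.Icc (0:ℝ) 1) = H :=
    Measure.restrict_eq_self_of_ae_mem hmem
  have hsplit : ∀ f : ℝ → ℝ, Integrable f H →
      (∫ x, f x ∂H) = (∫ x in Set.Icc 0 z, f x ∂H) + ∫ x in Set.Ioc z 1, f x ∂H := by
    intro f hf
    conv_lhs => rw [← hrest, ← Set.Icc_union_Ioc_eq_Icc hz0.le hz1.le]
    exact setIntegral_union hdisj measurableSet_Ioc hf.integrableOn hf.integrableOn
  -- integrals wrt Hhat
  set Hhat : Measure ℝ := H.restrict (Set.Icc 0 z) + ENNReal.ofReal p • Measure.dirac m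
    with hHhatdef
  have hofReal : (ENNReal.ofReal p) = H (Set.Ioc z 1) := by
    rw [hpdef, ENNReal.ofReal_toReal (measure_ne_top H _)]
  have hint_hat : ∀ f : ℝ → ℝ, Integrable f H → Measurable f →
      (∫ x, f x ∂Hhat) = (∫ x in Set.Icc 0 z, f x ∂H) + p * f m := by
    intro f hf hfm
    have hd : Integrable f (Measure.dirac m) := by
      refine Integrable.congr (integrable_const (f m)) ?_
      rw [ae_dirac_eq]
      exact Filter.eventually_pure.mpr rfl
    rw [hHhatdef, integral_add_measure hf.integrableOn
        (hd.smul_measure ENNReal.ofReal_ne_top),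
      integral_smul_measure, integral_dirac, ENNReal.toReal_ofReal hp.le, smul_eq_mul]
  -- max on pieces
  have hIcc_max : (∫ x in Set.Icc (0:ℝ) z, max x z ∂H)
      = z * (H (Set.Icc (0:ℝ) z)).toReal := by
    rw [setIntegral_congr_fun measurableSet_Icc (g := fun _ => z)
        (fun x hx => max_eq_right hx.2), setIntegral_const, smul_eq_mul, mul_comm]
    rfl
  have hIoc_max : (∫ x in Set.Ioc z 1, max x z ∂H) = sp := by
    rw [setIntegral_congr_fun measurableSet_Ioc (g := fun x => x)
        (fun x hx => max_eq_left hx.1.le)]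
  -- probability measure
  have hprob : IsProbabilityMeasure Hhat := by
    constructor
    rw [hHhatdef, Measure.add_apply, Measure.smul_apply, smul_eq_mul,
      Measure.restrict_apply_univ, Measure.dirac_apply' _ MeasurableSet.univ]
    simp only [Set.indicator_univ, Pi.one_apply, mul_one]
    rw [hofReal, ← measure_union hdisj measurableSet_Ioc,
      Set.Icc_union_Ioc_eq_Icc hz0.le hz1.le]
    have := measure_add_measure_compl (μ := H) (s := Set.Icc (0:ℝ) 1) measurableSet_Icc
    rw [hH, add_zero, measure_univ] at this
    exact this
  -- null complement
  have hcompl : Hhat (Set.Icc (0:ℝ) 1)ᶜ = 0 := by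
    rw [hHhatdef, Measure.add_apply, Measure.smul_apply, smul_eq_mul,
      Measure.restrict_apply measurableSet_Icc.compl,
      Measure.dirac_apply' _ measurableSet_Icc.compl,
      Set.indicator_of_notMem (by simpa using hm_mem), mul_zero, add_zero]
    exact measure_mono_null Set.inter_subset_left hH
  -- mean
  have hmean : (∫ x, x ∂Hhat) = ∫ x, x ∂H := by
    rw [hint_hat _ hint_id measurable_id, hpm, hsplit _ hint_id]
  -- reservation value
  have hmaxeq : (∫ x, max x z ∂Hhat) = ∫ x, max x z ∂H := by
    rw [hint_hat _ hint_max (measurable_id.max measurable_const), max_eq_left hm.le,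
      hpm, hsplit _ hint_max, hIoc_max]
  exact ⟨hm, hprob, hcompl, hmean, by rw [hmaxeq]; exact hres⟩
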